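/- Let y ∈ ℝ₊^{2m+1} have strictly positive components, let x⁰ ∈ ℝ^{m+1} be strictly positive, and define the iterates x^{t+1} = T(x^t) for t ≥ 0. If x^∞ ∈ ℝ^{m+1} is strictly positive and is a limit point of the sequence (x^t) (i.e., a limit along some subsequence), then x^∞ is a fixed point of the algorithm: T(x^∞) = x^∞. -/

import Mathlib

open Finset Filter

/-- Extension of `x : Fin (m+1) → ℝ` to `ℕ`, zero outside `[0, m]`. -/
def ext (m : ℕ) (x : Fin (m + 1) → ℝ) (k : ℕ) : ℝ :=
  if h : k < m + 1 then x ⟨k, h⟩ else 0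

/-- Autoconvolution `(x*x)_i = ∑_{j=0}^{i} x_{i-j} x_j`. -/
def aconv (m : ℕ) (x : Fin (m + 1) → ℝ) : Fin (2 * m + 1) → ℝ :=
  fun i => ∑ j ∈ Finset.range (i.1 + 1), ext m x (i.1 - j) * ext m x j

/-- The index `ℓ + j ∈ {0,…,2m}` for `ℓ, j ∈ {0,…,m}`. -/
def idx (m : ℕ) (ℓ j : Fin (m + 1)) : Fin (2 * m + 1) :=
  ⟨ℓ.1 + j.1, by have h1 := ℓ.isLt; have h2 := j.isLt; omega⟩

/-- One term of the I-divergence, with values in `[0,∞]`, with the conventions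
`0·log(0/b) = 0` and value `∞` if `a > 0 = b`. -/
noncomputable def termDiv (a b : ℝ) : ENNReal :=
  if a = 0 then ENNReal.ofReal b
  else if b = 0 then ⊤
  else ENNReal.ofReal (a * Real.log (a / b) - a + b)

/-- `[0,∞]`-valued I-divergence between vectors. -/
noncomputable def Idiv {n : ℕ} (u v : Fin n → ℝ) : ENNReal :=
  ∑ i, termDiv (u i) (v i)

/-- Real-valued I-divergence between vectors (used when the second argument is
positive wherever the first one is). -/
noncomputable def IdivR {n : ℕ} (u v : Fin n → ℝ) : ℝ :=
  ∑ i, (u i * Real.log (u i / v i) - u i + v i)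

/-- `[0,∞]`-valued I-divergence between `(2m+1) × (m+1)` matrices. -/
noncomputable def IdivM (m : ℕ) (M N : Fin (2 * m + 1) → Fin (m + 1) → ℝ) : ENNReal :=
  ∑ i, ∑ j, termDiv (M i j) (N i j)

/-- Real-valued I-divergence between `(2m+1) × (m+1)` matrices. -/
noncomputable def IdivMR (m : ℕ) (M N : Fin (2 * m + 1) → Fin (m + 1) → ℝ) : ℝ :=
  ∑ i, ∑ j, (M i j * Real.log (M i j / N i j) - M i j + N i j)

/-- The set 𝒴: nonnegative matrices supported on `{(i,j) : j ≤ i ≤ j+m}` with row sums `y`. -/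
def calY (m : ℕ) (y : Fin (2 * m + 1) → ℝ) (Y : Fin (2 * m + 1) → Fin (m + 1) → ℝ) : Prop :=
  (∀ i j, 0 ≤ Y i j) ∧
  (∀ (i : Fin (2 * m + 1)) (j : Fin (m + 1)), ¬(j.1 ≤ i.1 ∧ i.1 ≤ j.1 + m) → Y i j = 0) ∧
  (∀ i, ∑ j, Y i j = y i)

/-- The matrix `W(x)` with `W(x)_{ij} = x_{i-j} x_j` on the support and `0` elsewhere. -/
def Wmat (m : ℕ) (x : Fin (m + 1) → ℝ) (i : Fin (2 * m + 1)) (j : Fin (m + 1)) : ℝ :=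
  if h : j.1 ≤ i.1 ∧ i.1 ≤ j.1 + m then x ⟨i.1 - j.1, by omega⟩ * x j else 0

/-- The matrix `Y*(x)` with `Y*(x)_{ij} = (x_{i-j} x_j/(x*x)_i)·y_i` on the support. -/
noncomputable def Ystar (m : ℕ) (y : Fin (2 * m + 1) → ℝ) (x : Fin (m + 1) → ℝ)
    (i : Fin (2 * m + 1)) (j : Fin (m + 1)) : ℝ :=
  if h : j.1 ≤ i.1 ∧ i.1 ≤ j.1 + m then
    x ⟨i.1 - j.1, by omega⟩ * x j / aconv m x i * y i
  else 0

/-- `Ŷ_j = ∑_{i=0}^{m} Y_{i+j,i} + ∑_{i=j}^{j+m} Y_{ij}`. -/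
def Yhat (m : ℕ) (Y : Fin (2 * m + 1) → Fin (m + 1) → ℝ) (j : Fin (m + 1)) : ℝ :=
  (∑ ℓ : Fin (m + 1), Y (idx m ℓ j) ℓ) + ∑ ℓ : Fin (m + 1), Y (idx m ℓ j) j

/-- The algorithm map `T(x)_j = x_j (1/c) ∑_ℓ x_ℓ y_{ℓ+j}/(x*x)_{ℓ+j}`,
with `c = √(∑ y_i)`. -/
noncomputable def Tmap (m : ℕ) (y : Fin (2 * m + 1) → ℝ) (x : Fin (m + 1) → ℝ)
    (j : Fin (m + 1)) : ℝ :=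
  x j * (1 / Real.sqrt (∑ i, y i)) * ∑ ℓ, x ℓ * y (idx m ℓ j) / aconv m x (idx m ℓ j)

/-- The gradient `∇_j I(x) = 2 ∑_ℓ ( x_ℓ − x_ℓ y_{ℓ+j}/(x*x)_{ℓ+j} )`. -/
noncomputable def gradI (m : ℕ) (y : Fin (2 * m + 1) → ℝ) (x : Fin (m + 1) → ℝ)
    (j : Fin (m + 1)) : ℝ :=
  2 * ∑ ℓ, (x ℓ - x ℓ * y (idx m ℓ j) / aconv m x (idx m ℓ j))

lemma ext_nonneg {m : ℕ} {x : Fin (m+1) → ℝ} (hx : ∀ j, 0 < x j) (k : ℕ) :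
    0 ≤ _root_.ext m x k := by
  unfold _root_.ext; split
  · exact (hx _).le
  · exact le_refl _

lemma ext_pos {m : ℕ} {x : Fin (m+1) → ℝ} (hx : ∀ j, 0 < x j) {k : ℕ} (hk : k < m + 1) :
    0 < _root_.ext m x k := by
  unfold _root_.ext; rw [dif_pos hk]; exact hx _

lemma aconv_pos {m : ℕ} {x : Fin (m+1) → ℝ} (hx : ∀ j, 0 < x j) (i : Fin (2*m+1)) :
    0 < aconv m x i := by
  have hi := i.isLt
  apply Finset.sum_pos'
  · intro j _; exact mul_nonneg (ext_nonneg hx _) (ext_nonneg hx _)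
  · refine ⟨min i.1 m, by simp [Nat.lt_succ_iff, min_le_left], ?_⟩
    exact mul_pos (ext_pos hx (by omega)) (ext_pos hx (by omega))


lemma ext_zero {m : ℕ} (x : Fin (m+1) → ℝ) {k : ℕ} (hk : ¬ k < m + 1) :
    _root_.ext m x k = 0 := by
  unfold _root_.ext; rw [dif_neg hk]

lemma ext_in {m : ℕ} (x : Fin (m+1) → ℝ) {k : ℕ} (hk : k < m + 1) :
    _root_.ext m x k = x ⟨k, hk⟩ := by
  unfold _root_.ext; rw [dif_pos hk]

lemma reindex (m : ℕ) (F : Fin (2*m+1) → ℝ) (g h : Fin (m+1) → ℝ) :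
    ∑ i : Fin (2*m+1), F i * ∑ j ∈ Finset.range (i.1+1), _root_.ext m g (i.1-j) * _root_.ext m h j
    = ∑ ℓ : Fin (m+1), ∑ j : Fin (m+1), F (idx m ℓ j) * (g ℓ * h j) := by
  simp_rw [Finset.mul_sum]
  rw [Finset.sum_sigma', ← Finset.sum_product']
  rw [← Finset.sum_filter_of_ne (p := fun p : Σ _ : Fin (2*m+1), ℕ => p.1.1 - p.2 < m + 1 ∧ p.2 < m + 1)
      (by intro p _ hne
          constructor
          · by_contra hc
            exact hne (by rw [ext_zero g hc]; ring)
          · by_contra hc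
            exact hne (by rw [ext_zero h hc]; ring))]
  refine Finset.sum_nbij'
    (fun p => (⟨min (p.1.1 - p.2) m, by omega⟩, ⟨min p.2 m, by omega⟩))
    (fun q => ⟨idx m q.1 q.2, q.2.1⟩) ?_ ?_ ?_ ?_ ?_
  · intro p _; simp
  · intro q _
    simp only [Finset.mem_filter, Finset.mem_sigma, Finset.mem_univ, Finset.mem_range, idx,
      true_and]
    have := q.1.isLt; have := q.2.isLt
    omega
  · intro p hp
    obtain ⟨⟨i, hi⟩, j⟩ := p
    simp only [Finset.mem_filter, Finset.mem_sigma, Finset.mem_univ, Finset.mem_range,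
      true_and] at hp
    obtain ⟨hp1, hp2, hp3⟩ := hp
    have e1 : min (i - j) m = i - j := by omega
    have e2 : min j m = j := by omega
    dsimp only
    simp only [idx, e1, e2]
    have e4 : i - j + j = i := by omega
    simp only [e4]
  · intro q hq
    have := q.1.isLt; have := q.2.isLt
    simp only [idx, Prod.ext_iff, Fin.ext_iff]
    constructor <;> simp <;> omega
  · intro p hp
    obtain ⟨⟨i, hi⟩, j⟩ := p
    simp only [Finset.mem_filter, Finset.mem_sigma, Finset.mem_univ, Finset.mem_range,
      true_and] at hp
    obtain ⟨hp1, hp2, hp3⟩ := hp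
    have e1 : min (i - j) m = i - j := by omega
    have e2 : min j m = j := by omega
    rw [ext_in g hp2, ext_in h hp3]
    dsimp only
    simp only [e1, e2]
    have e3 : idx m ⟨i - j, hp2⟩ ⟨j, hp3⟩ = ⟨i, hi⟩ := by
      simp only [idx, Fin.mk.injEq]; omega
    rw [e3]

section
variable {m : ℕ} {y : Fin (2*m+1) → ℝ} {x : Fin (m+1) → ℝ}

lemma sumy_pos (hy : ∀ i, 0 < y i) : 0 < ∑ i, y i :=
  Finset.sum_pos (fun i _ => hy i) ⟨⟨0, by omega⟩, Finset.mem_univ _⟩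

lemma c_pos (hy : ∀ i, 0 < y i) : 0 < Real.sqrt (∑ i, y i) :=
  Real.sqrt_pos.2 (sumy_pos hy)

lemma c_sq (hy : ∀ i, 0 < y i) : (Real.sqrt (∑ i, y i))^2 = ∑ i, y i :=
  Real.sq_sqrt (sumy_pos hy).le

lemma sumAconv (x : Fin (m+1) → ℝ) : ∑ i, aconv m x i = (∑ j, x j)^2 := by
  have R := reindex m (fun _ => 1) x x
  simp only [one_mul] at R
  rw [show (∑ i, aconv m x i) = ∑ i : Fin (2*m+1), ∑ j ∈ Finset.range (i.1+1),
    _root_.ext m x (i.1-j) * _root_.ext m x j from rfl, R, ← Finset.sum_mul_sum, sq]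

lemma idx_symm (m : ℕ) (ℓ j : Fin (m+1)) : idx m ℓ j = idx m j ℓ := by
  simp [idx, Fin.ext_iff]; omega

lemma cT (hy : ∀ i, 0 < y i) (hx : ∀ j, 0 < x j) (j : Fin (m+1)) :
    Real.sqrt (∑ i, y i) * Tmap m y x j
      = x j * ∑ ℓ, x ℓ * ((fun i => y i / aconv m x i) (idx m ℓ j)) := by
  have hc0 : Real.sqrt (∑ i, y i) ≠ 0 := (c_pos hy).ne'
  have hs : ∑ ℓ, x ℓ * ((fun i => y i / aconv m x i) (idx m ℓ j))
      = ∑ ℓ, x ℓ * y (idx m ℓ j) / aconv m x (idx m ℓ j) := by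
    apply Finset.sum_congr rfl; intro ℓ _; simp only; ring
  rw [Tmap, hs]
  field_simp

lemma sumT (hy : ∀ i, 0 < y i) (hx : ∀ j, 0 < x j) :
    ∑ j, Tmap m y x j = Real.sqrt (∑ i, y i) := by
  set c := Real.sqrt (∑ i, y i)
  have hc := c_pos hy
  have R := reindex m (fun i => y i / aconv m x i) x x
  have hL : ∑ i : Fin (2*m+1), (fun i => y i / aconv m x i) i *
      ∑ j ∈ Finset.range (i.1+1), _root_.ext m x (i.1-j) * _root_.ext m x j = ∑ i, y i := by
    apply Finset.sum_congr rfl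
    intro i _
    rw [show (∑ j ∈ Finset.range (i.1+1), _root_.ext m x (i.1-j) * _root_.ext m x j) = aconv m x i from rfl]
    exact div_mul_cancel₀ _ (aconv_pos hx i).ne'
  have key : c * ∑ j, Tmap m y x j = ∑ i, y i := by
    rw [Finset.mul_sum]
    calc ∑ j, c * Tmap m y x j
        = ∑ j, x j * ∑ ℓ, x ℓ * ((fun i => y i / aconv m x i) (idx m ℓ j)) := by
          exact Finset.sum_congr rfl fun j _ => cT hy hx j
      _ = ∑ j : Fin (m+1), ∑ ℓ : Fin (m+1), (fun i => y i / aconv m x i) (idx m ℓ j) * (x ℓ * x j) := by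
          apply Finset.sum_congr rfl; intro j _
          rw [Finset.mul_sum]; apply Finset.sum_congr rfl; intro ℓ _; ring
      _ = ∑ ℓ : Fin (m+1), ∑ j : Fin (m+1), (fun i => y i / aconv m x i) (idx m ℓ j) * (x ℓ * x j) := by
          rw [Finset.sum_comm]
      _ = ∑ i, y i := by rw [R] at hL; exact hL
  have := c_sq hy
  nlinarith [key]
end

noncomputable def fdiv (m : ℕ) (y : Fin (2*m+1) → ℝ) (x : Fin (m+1) → ℝ) : ℝ :=
  ∑ i, (y i * Real.log (y i / aconv m x i) - y i + aconv m x i)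

section
variable {m : ℕ} {y : Fin (2*m+1) → ℝ} {x : Fin (m+1) → ℝ}

lemma Tmap_pos (hy : ∀ i, 0 < y i) (hx : ∀ j, 0 < x j) (j : Fin (m+1)) :
    0 < Tmap m y x j := by
  apply mul_pos (mul_pos (hx j) (one_div_pos.2 (c_pos hy)))
  apply Finset.sum_pos _ ⟨⟨0, by omega⟩, Finset.mem_univ _⟩
  intro ℓ _
  exact div_pos (mul_pos (hx ℓ) (hy _)) (aconv_pos hx _)

lemma fdiv_nonneg (hy : ∀ i, 0 < y i) (hx : ∀ j, 0 < x j) : 0 ≤ fdiv m y x := by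
  apply Finset.sum_nonneg
  intro i _
  have hA := aconv_pos hx i
  have hyi := hy i
  have h1 : Real.log (aconv m x i / y i) ≤ aconv m x i / y i - 1 :=
    Real.log_le_sub_one_of_pos (by positivity)
  have h2 : Real.log (aconv m x i / y i) = Real.log (aconv m x i) - Real.log (y i) :=
    Real.log_div hA.ne' hyi.ne'
  have h3 : Real.log (y i / aconv m x i) = Real.log (y i) - Real.log (aconv m x i) :=
    Real.log_div hyi.ne' hA.ne'
  rw [h2] at h1
  have h4 := mul_le_mul_of_nonneg_left h1 hyi.le
  have h5 : y i * (aconv m x i / y i) = aconv m x i := mul_div_cancel₀ _ hyi.ne'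
  rw [h3]
  nlinarith [h4, h5]

lemma phi_nonneg {t : ℝ} (ht : 0 < t) : 0 ≤ t - 1 - Real.log t := by
  have := Real.log_le_sub_one_of_pos ht; linarith

lemma phi_eq_zero {t : ℝ} (ht : 0 < t) (h : t - 1 - Real.log t = 0) : t = 1 := by
  by_contra hne
  have := Real.log_lt_sub_one_of_pos ht hne
  linarith

lemma cont_ext (m : ℕ) (k : ℕ) : Continuous fun x : Fin (m+1) → ℝ => _root_.ext m x k := by
  by_cases h : k < m + 1
  · simp only [_root_.ext, dif_pos h]
    exact continuous_apply _
  · simp only [_root_.ext, dif_neg h]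
    exact continuous_const

lemma cont_aconv (m : ℕ) (i : Fin (2*m+1)) : Continuous fun x : Fin (m+1) → ℝ => aconv m x i :=
  continuous_finset_sum _ fun j _ => (cont_ext m _).mul (cont_ext m _)

lemma contAt_fdiv (hy : ∀ i, 0 < y i) (hx : ∀ j, 0 < x j) : ContinuousAt (fdiv m y) x := by
  apply tendsto_finset_sum
  intro i _
  have hA := aconv_pos hx i
  have h1 : ContinuousAt (fun x : Fin (m+1) → ℝ => aconv m x i) x := (cont_aconv m i).continuousAt
  have h2 : ContinuousAt (fun x : Fin (m+1) → ℝ => Real.log (y i / aconv m x i)) x := by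
    have h2' : ContinuousAt (fun x : Fin (m+1) → ℝ => y i / aconv m x i) x :=
      continuousAt_const.div h1 hA.ne'
    exact h2'.log (div_pos (hy i) hA).ne'
  exact ((continuousAt_const.mul h2).sub continuousAt_const).add h1

lemma contAt_Tmap (hy : ∀ i, 0 < y i) (hx : ∀ j, 0 < x j) :
    ContinuousAt (Tmap m y) x := by
  rw [continuousAt_pi]
  intro j
  apply ContinuousAt.mul
  · exact ((continuous_apply j).continuousAt).mul continuousAt_const
  · apply tendsto_finset_sum
    intro ℓ _
    exact (((continuous_apply ℓ).continuousAt).mul continuousAt_const).div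
      (cont_aconv m _).continuousAt (aconv_pos hx _).ne'
end

section
variable {m : ℕ} {y : Fin (2*m+1) → ℝ} {x : Fin (m+1) → ℝ}

lemma ext_ne_imp {x : Fin (m+1) → ℝ} (hx : ∀ j, 0 < x j) {k : ℕ} (h : _root_.ext m x k = 0) :
    ¬ k < m + 1 := by
  intro hk
  rw [ext_in x hk] at h
  exact (hx _).ne' h

lemma key (hy : ∀ i, 0 < y i) (hx : ∀ j, 0 < x j) :
    2 * Real.sqrt (∑ i, y i) *
        (∑ j, Tmap m y x j *
          (x j / Tmap m y x j - 1 - Real.log (x j / Tmap m y x j)))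
      + ((∑ j, x j) - Real.sqrt (∑ i, y i))^2
    ≤ fdiv m y x - fdiv m y (Tmap m y x) := by
  set c := Real.sqrt (∑ i, y i) with hcdef
  have hc : 0 < c := c_pos hy
  set x' := Tmap m y x with hx'def
  have hx' : ∀ j, 0 < x' j := Tmap_pos hy hx
  have hA : ∀ i, 0 < aconv m x i := aconv_pos hx
  have hA' : ∀ i, 0 < aconv m x' i := aconv_pos hx'
  set ψ : Fin (m+1) → ℝ := fun j => Real.log (x' j) - Real.log (x j) with hψ
  set g : Fin (m+1) → ℝ := fun ℓ => x ℓ * ψ ℓ with hg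
  set F : Fin (2*m+1) → ℝ := fun i => y i / aconv m x i with hF
  -- Step J: per-i Jensen inequality
  have stepJ : ∀ i : Fin (2*m+1),
      F i * (∑ j ∈ Finset.range (i.1+1),
        (_root_.ext m g (i.1-j) * _root_.ext m x j + _root_.ext m x (i.1-j) * _root_.ext m g j))
      ≤ y i * (Real.log (aconv m x' i) - Real.log (aconv m x i)) := by
    intro i
    set W := aconv m x i with hW
    set t := Finset.range (i.1+1) with ht
    set w : ℕ → ℝ := fun j => _root_.ext m x (i.1-j) * _root_.ext m x j with hw
    set w' : ℕ → ℝ := fun j => _root_.ext m x' (i.1-j) * _root_.ext m x' j with hw'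
    set p : ℕ → ℝ := fun j => if w j = 0 then 1 else w' j / w j with hp
    have hwsum : ∑ j ∈ t, w j = W := rfl
    have hw'sum : ∑ j ∈ t, w' j = aconv m x' i := rfl
    have hwnn : ∀ j, 0 ≤ w j := fun j => mul_nonneg (ext_nonneg hx _) (ext_nonneg hx _)
    have hzz : ∀ j, w j = 0 → w' j = 0 := by
      intro j h
      rcases mul_eq_zero.1 h with h | h
      · exact mul_eq_zero.2 (Or.inl (ext_zero x' (ext_ne_imp hx h)))
      · exact mul_eq_zero.2 (Or.inr (ext_zero x' (ext_ne_imp hx h)))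
    have jensen := (strictConcaveOn_log_Ioi.concaveOn).le_map_sum
      (t := t) (w := fun j => w j / W) (p := p)
      (fun j _ => div_nonneg (hwnn j) (hA i).le)
      (by rw [← Finset.sum_div, hwsum]; exact div_self (hA i).ne')
      (by intro j _
          by_cases h : w j = 0
          · simp [hp, h]
          · have hwpos : 0 < w j := lt_of_le_of_ne (hwnn j) (Ne.symm h)
            have hr1 : i.1 - j < m + 1 := by
              by_contra hc'
              exact h (mul_eq_zero.2 (Or.inl (ext_zero x hc')))
            have hr2 : j < m + 1 := by
              by_contra hc'
              exact h (mul_eq_zero.2 (Or.inr (ext_zero x hc')))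
            have hw'pos : 0 < w' j := by
              simp only [hw', ext_in x' hr1, ext_in x' hr2]
              exact mul_pos (hx' _) (hx' _)
            simp only [hp, if_neg h]
            exact Set.mem_Ioi.2 (div_pos hw'pos hwpos))
    have hW0 : W ≠ 0 := (hA i).ne'
    have hsum : ∑ j ∈ t, (w j / W) • p j = aconv m x' i / W := by
      rw [← hw'sum, Finset.sum_div]
      apply Finset.sum_congr rfl
      intro j _
      by_cases h : w j = 0
      · simp [hp, h, hzz j h]
      · simp only [hp, if_neg h, smul_eq_mul]
        field_simp
    have hlhs : ∑ j ∈ t, (w j / W) • Real.log (p j)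
        = (1/W) * ∑ j ∈ t, (_root_.ext m g (i.1-j) * _root_.ext m x j
            + _root_.ext m x (i.1-j) * _root_.ext m g j) := by
      rw [Finset.mul_sum]
      apply Finset.sum_congr rfl
      intro j _
      by_cases h : w j = 0
      · have h0 : _root_.ext m g (i.1-j) * _root_.ext m x j
            + _root_.ext m x (i.1-j) * _root_.ext m g j = 0 := by
          rcases mul_eq_zero.1 h with h' | h'
          · rw [ext_zero g (ext_ne_imp hx h'), h']; ring
          · rw [ext_zero g (ext_ne_imp hx h'), h']; ring
        rw [h0]
        simp [hp, h]
      · have hr1 : i.1 - j < m + 1 := by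
          by_contra hc'
          exact h (mul_eq_zero.2 (Or.inl (ext_zero x hc')))
        have hr2 : j < m + 1 := by
          by_contra hc'
          exact h (mul_eq_zero.2 (Or.inr (ext_zero x hc')))
        have ha1 := hx ⟨i.1 - j, hr1⟩
        have ha2 := hx ⟨j, hr2⟩
        have hb1 := hx' ⟨i.1 - j, hr1⟩
        have hb2 := hx' ⟨j, hr2⟩
        simp only [hp, if_neg h, smul_eq_mul, ext_in g hr1, ext_in g hr2]
        simp only [hw, hw', ext_in x hr1, ext_in x hr2,
          ext_in x' hr1, ext_in x' hr2, hg, hψ]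
        rw [Real.log_div (mul_pos hb1 hb2).ne' (mul_pos ha1 ha2).ne',
          Real.log_mul hb1.ne' hb2.ne', Real.log_mul ha1.ne' ha2.ne']
        ring
    rw [hlhs, hsum] at jensen
    have hlog : Real.log (aconv m x' i / W) = Real.log (aconv m x' i) - Real.log W :=
      Real.log_div (hA' i).ne' hW0
    rw [hlog] at jensen
    have := mul_le_mul_of_nonneg_left jensen (hy i).le
    calc F i * (∑ j ∈ Finset.range (i.1+1),
          (_root_.ext m g (i.1-j) * _root_.ext m x j + _root_.ext m x (i.1-j) * _root_.ext m g j))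
        = y i * ((1/W) * ∑ j ∈ t, (_root_.ext m g (i.1-j) * _root_.ext m x j
            + _root_.ext m x (i.1-j) * _root_.ext m g j)) := by
          simp only [hF, ht]; ring
      _ ≤ y i * (Real.log (aconv m x' i) - Real.log W) := this
      _ = y i * (Real.log (aconv m x' i) - Real.log (aconv m x i)) := by rw [hW]
  -- Step S: sum over i
  have stepS : 2 * (∑ j, (c * x' j) * ψ j)
      ≤ ∑ i, y i * (Real.log (aconv m x' i) - Real.log (aconv m x i)) := by
    have hsplit : ∑ i : Fin (2*m+1), F i * (∑ j ∈ Finset.range (i.1+1),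
        (_root_.ext m g (i.1-j) * _root_.ext m x j + _root_.ext m x (i.1-j) * _root_.ext m g j))
        = (∑ i : Fin (2*m+1), F i * ∑ j ∈ Finset.range (i.1+1),
            _root_.ext m g (i.1-j) * _root_.ext m x j)
          + ∑ i : Fin (2*m+1), F i * ∑ j ∈ Finset.range (i.1+1),
            _root_.ext m x (i.1-j) * _root_.ext m g j := by
      rw [← Finset.sum_add_distrib]
      apply Finset.sum_congr rfl
      intro i _
      rw [← mul_add, ← Finset.sum_add_distrib]
    have hR1 := reindex m F g x
    have hR2 := reindex m F x g
    have hswap : ∑ ℓ : Fin (m+1), ∑ j : Fin (m+1), F (idx m ℓ j) * (g ℓ * x j)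
        = ∑ ℓ : Fin (m+1), ∑ j : Fin (m+1), F (idx m ℓ j) * (x ℓ * g j) := by
      rw [Finset.sum_comm]
      apply Finset.sum_congr rfl
      intro a _
      apply Finset.sum_congr rfl
      intro b _
      rw [idx_symm]
      ring
    have hinner : ∀ j : Fin (m+1), ∑ ℓ : Fin (m+1), F (idx m ℓ j) * (x ℓ * g j)
        = (c * x' j) * ψ j := by
      intro j
      have h1 : ∑ ℓ : Fin (m+1), F (idx m ℓ j) * (x ℓ * g j)
          = (x j * ∑ ℓ, x ℓ * ((fun i => y i / aconv m x i) (idx m ℓ j))) * ψ j := by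
        rw [Finset.mul_sum, Finset.sum_mul]
        exact Finset.sum_congr rfl fun ℓ _ => by simp only [hg, hF]; ring
      rw [h1, ← cT hy hx j]
    have htot : ∑ i : Fin (2*m+1), F i * (∑ j ∈ Finset.range (i.1+1),
        (_root_.ext m g (i.1-j) * _root_.ext m x j + _root_.ext m x (i.1-j) * _root_.ext m g j))
        = 2 * (∑ j, (c * x' j) * ψ j) := by
      rw [hsplit, hR1, hR2, hswap,
        Finset.sum_comm (f := fun ℓ j => F (idx m ℓ j) * (x ℓ * g j)),
        show (∑ j : Fin (m+1), ∑ ℓ : Fin (m+1), F (idx m ℓ j) * (x ℓ * g j))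
          = ∑ j, (c * x' j) * ψ j from Finset.sum_congr rfl fun j _ => hinner j]
      ring
    rw [← htot]
    exact Finset.sum_le_sum fun i _ => stepJ i
  -- Step D: fdiv difference
  have hsx' : ∑ j, x' j = c := sumT hy hx
  have hD : fdiv m y x - fdiv m y x'
      = (∑ i, y i * (Real.log (aconv m x' i) - Real.log (aconv m x i)))
        + ((∑ j, x j)^2 - c^2) := by
    rw [fdiv, fdiv, ← Finset.sum_sub_distrib]
    have hper : ∀ i : Fin (2*m+1), (y i * Real.log (y i / aconv m x i) - y i + aconv m x i)
        - (y i * Real.log (y i / aconv m x' i) - y i + aconv m x' i)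
        = y i * (Real.log (aconv m x' i) - Real.log (aconv m x i))
          + (aconv m x i - aconv m x' i) := by
      intro i
      rw [Real.log_div (hy i).ne' (hA i).ne', Real.log_div (hy i).ne' (hA' i).ne']
      ring
    rw [Finset.sum_congr rfl fun i _ => hper i, Finset.sum_add_distrib,
      Finset.sum_sub_distrib, sumAconv x, sumAconv x', hsx']
  -- final algebra
  have hperj : ∀ j, x' j * (x j / x' j - 1 - Real.log (x j / x' j))
      = x j - x' j + x' j * ψ j := by
    intro j
    have e1 : x' j * (x j / x' j) = x j := by
      rw [mul_comm]; exact div_mul_cancel₀ _ (hx' j).ne'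
    rw [Real.log_div (hx j).ne' (hx' j).ne']
    simp only [hψ]
    linear_combination e1
  have hsum1 : ∑ j, x' j * (x j / x' j - 1 - Real.log (x j / x' j))
      = (∑ j, x j) - c + ∑ j, x' j * ψ j := by
    rw [Finset.sum_congr rfl fun j _ => hperj j, Finset.sum_add_distrib,
      Finset.sum_sub_distrib, hsx']
  have final : 2 * c * (∑ j, x' j * (x j / x' j - 1 - Real.log (x j / x' j)))
        + ((∑ j, x j) - c)^2
      = 2 * (∑ j, (c * x' j) * ψ j) + ((∑ j, x j)^2 - c^2) := by
    have e2 : ∑ j, (c * x' j) * ψ j = c * ∑ j, x' j * ψ j := by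
      rw [Finset.mul_sum]; exact Finset.sum_congr rfl fun j _ => by ring
    rw [hsum1, e2]; ring
  linarith [stepS, final, hD]
end

set_option maxHeartbeats 1000000 in
/-- a strictly positive limit point of the iterates is a fixed
point of the algorithm. -/
theorem stmt16 (m : ℕ) (y : Fin (2 * m + 1) → ℝ) (hy : ∀ i, 0 < y i)
    (xs : ℕ → Fin (m + 1) → ℝ) (h0 : ∀ j, 0 < xs 0 j)
    (hstep : ∀ t, xs (t + 1) = Tmap m y (xs t))
    (xinf : Fin (m + 1) → ℝ) (hpos : ∀ j, 0 < xinf j)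
    (hlim : ∃ φ : ℕ → ℕ, StrictMono φ ∧
      Filter.Tendsto (fun k => xs (φ k)) Filter.atTop (nhds xinf)) :
    Tmap m y xinf = xinf := by

  obtain ⟨φ, hφ, hconv⟩ := hlim
  have hxt : ∀ t j, 0 < xs t j := by
    intro t
    induction t with
    | zero => exact h0
    | succ t ih => rw [hstep t]; exact Tmap_pos hy ih
  set c := Real.sqrt (∑ i, y i) with hcdef
  have hc : 0 < c := c_pos hy
  have hmono : ∀ t, fdiv m y (xs (t+1)) ≤ fdiv m y (xs t) := by
    intro t
    rw [hstep t]
    have hk := key hy (hxt t)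
    have hs : 0 ≤ ∑ j, Tmap m y (xs t) j *
        (xs t j / Tmap m y (xs t) j - 1 - Real.log (xs t j / Tmap m y (xs t) j)) := by
      apply Finset.sum_nonneg
      intro j _
      exact mul_nonneg (Tmap_pos hy (hxt t) j).le
        (phi_nonneg (div_pos (hxt t j) (Tmap_pos hy (hxt t) j)))
    have h2cS := mul_nonneg (by linarith : (0:ℝ) ≤ 2 * c) hs
    nlinarith [sq_nonneg ((∑ j, xs t j) - c), h2cS]
  have hanti : Antitone (fun t => fdiv m y (xs t)) := antitone_nat_of_succ_le hmono
  have hbdd : BddBelow (Set.range fun t => fdiv m y (xs t)) := by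
    refine ⟨0, ?_⟩
    rintro v ⟨t, rfl⟩
    exact fdiv_nonneg hy (hxt t)
  have hL : Tendsto (fun t => fdiv m y (xs t)) atTop (nhds (⨅ t, fdiv m y (xs t))) :=
    tendsto_atTop_ciInf hanti hbdd
  set L := ⨅ t, fdiv m y (xs t) with hLdef
  have hφt : Tendsto φ atTop atTop := hφ.tendsto_atTop
  have h1 : Tendsto (fun k => fdiv m y (xs (φ k))) atTop (nhds L) := hL.comp hφt
  have h2 : Tendsto (fun k => fdiv m y (xs (φ k))) atTop (nhds (fdiv m y xinf)) :=
    (contAt_fdiv hy hpos).tendsto.comp hconv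
  have hfx : fdiv m y xinf = L := tendsto_nhds_unique h2 h1
  have hφ1 : Tendsto (fun k => φ k + 1) atTop atTop :=
    (tendsto_add_atTop_nat 1).comp hφt
  have h3 : Tendsto (fun k => fdiv m y (xs (φ k + 1))) atTop (nhds L) := hL.comp hφ1
  have h4 : Tendsto (fun k => xs (φ k + 1)) atTop (nhds (Tmap m y xinf)) := by
    have : (fun k => xs (φ k + 1)) = fun k => Tmap m y (xs (φ k)) :=
      funext fun k => hstep (φ k)
    rw [this]
    exact (contAt_Tmap hy hpos).tendsto.comp hconv
  have h5 : Tendsto (fun k => fdiv m y (xs (φ k + 1))) atTop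
      (nhds (fdiv m y (Tmap m y xinf))) :=
    (contAt_fdiv hy (Tmap_pos hy hpos)).tendsto.comp h4
  have hfT : fdiv m y (Tmap m y xinf) = L := tendsto_nhds_unique h5 h3
  have hk := key hy hpos
  rw [hfx, hfT, sub_self] at hk
  have hs : 0 ≤ ∑ j, Tmap m y xinf j *
      (xinf j / Tmap m y xinf j - 1 - Real.log (xinf j / Tmap m y xinf j)) := by
    apply Finset.sum_nonneg
    intro j _
    exact mul_nonneg (Tmap_pos hy hpos j).le
      (phi_nonneg (div_pos (hpos j) (Tmap_pos hy hpos j)))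
  have hzero : ∑ j, Tmap m y xinf j *
      (xinf j / Tmap m y xinf j - 1 - Real.log (xinf j / Tmap m y xinf j)) = 0 := by
    have h2cS := mul_nonneg (by linarith : (0:ℝ) ≤ 2 * c) hs
    have hle : 2 * c * (∑ j, Tmap m y xinf j *
        (xinf j / Tmap m y xinf j - 1 - Real.log (xinf j / Tmap m y xinf j))) = 0 := by
      nlinarith [sq_nonneg ((∑ j, xinf j) - c), h2cS]
    rcases mul_eq_zero.1 hle with h | h
    · linarith
    · exact h
  have hterm := (Finset.sum_eq_zero_iff_of_nonneg (fun j _ =>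
    mul_nonneg (Tmap_pos hy hpos j).le
      (phi_nonneg (div_pos (hpos j) (Tmap_pos hy hpos j))))).1 hzero
  funext j
  have hj := hterm j (Finset.mem_univ j)
  have hT := Tmap_pos hy hpos j
  have hphi : xinf j / Tmap m y xinf j - 1 - Real.log (xinf j / Tmap m y xinf j) = 0 := by
    rcases mul_eq_zero.1 hj with h | h
    · exact absurd h hT.ne'
    · exact h
  have := phi_eq_zero (div_pos (hpos j) hT) hphi
  field_simp at this
  exact this.symm
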